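/- A matrix a in Mₙ(ℂ) normalizes the diagonal subalgebra Dₙ (i.e., a*Dₙa + aDₙa* ⊆ Dₙ) if and only if a has at most one nonzero entry in each row and at most one nonzero entry in each column. -/
import Mathlib

open Matrix in
lemma aux_star_mul_diag (n : ℕ) (a : Matrix (Fin n) (Fin n) ℂ) (f : Fin n → ℂ)
    (p q : Fin n) :
    (star a * Matrix.diagonal f * a) p q = ∑ x, star (a x p) * f x * a x q := by
  simp [Matrix.mul_apply, Matrix.diagonal_apply, Matrix.star_apply, Finset.sum_ite_eq, mul_ite, mul_zero, ite_mul, zero_mul]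

open Matrix in
lemma aux_mul_diag_star (n : ℕ) (a : Matrix (Fin n) (Fin n) ℂ) (f : Fin n → ℂ)
    (p q : Fin n) :
    (a * Matrix.diagonal f * star a) p q = ∑ x, a p x * f x * star (a q x) := by
  simp [Matrix.mul_apply, Matrix.diagonal_apply, Matrix.star_apply, Finset.sum_ite_eq, mul_ite, mul_zero, ite_mul, zero_mul]

/-- a matrix in `Mₙ(ℂ)` normalizes the diagonal subalgebra iff it has at
most one nonzero entry in each row and each column. -/
theorem matrix_normalizes_diagonal_iff (n : ℕ) (a : Matrix (Fin n) (Fin n) ℂ) :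
    (∀ d : Matrix (Fin n) (Fin n) ℂ, d.IsDiag →
      (star a * d * a).IsDiag ∧ (a * d * star a).IsDiag) ↔
    ((∀ i, {j | a i j ≠ 0}.Subsingleton) ∧ (∀ j, {i | a i j ≠ 0}.Subsingleton)) := by
  constructor
  · intro h
    constructor
    · intro i j hj k hk
      by_contra hjk
      have hd := (h (Matrix.diagonal (fun x => if x = i then (1:ℂ) else 0))
        (Matrix.isDiag_diagonal _)).1 hjk
      replace hd : (star a * Matrix.diagonal (fun x => if x = i then (1:ℂ) else 0) * a) j k = 0 := hd
      rw [aux_star_mul_diag] at hd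
      simp only [mul_ite, mul_one, mul_zero, ite_mul, zero_mul,
        Finset.sum_ite_eq, Finset.sum_ite_eq', Finset.mem_univ, if_true] at hd
      exact hk ((mul_eq_zero.mp hd).resolve_left (by simpa [star_eq_zero] using hj))
    · intro j i hi k hk
      by_contra hik
      have hd := (h (Matrix.diagonal (fun x => if x = j then (1:ℂ) else 0))
        (Matrix.isDiag_diagonal _)).2 hik
      replace hd : (a * Matrix.diagonal (fun x => if x = j then (1:ℂ) else 0) * star a) i k = 0 := hd
      rw [aux_mul_diag_star] at hd
      simp only [mul_ite, mul_one, mul_zero, ite_mul, zero_mul,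
        Finset.sum_ite_eq, Finset.sum_ite_eq', Finset.mem_univ, if_true] at hd
      exact hk (by simpa [star_eq_zero] using (mul_eq_zero.mp hd).resolve_left hi)
  · rintro ⟨hrow, hcol⟩ d hdd
    rw [← hdd.diagonal_diag]
    constructor
    · intro p q hpq
      rw [aux_star_mul_diag]
      apply Finset.sum_eq_zero
      intro x _
      by_cases h1 : a x p = 0
      · simp [h1]
      by_cases h2 : a x q = 0
      · simp [h2]
      · exact absurd (hrow x h1 h2) hpq
    · intro p q hpq
      rw [aux_mul_diag_star]
      apply Finset.sum_eq_zero
      intro x _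
      by_cases h1 : a p x = 0
      · simp [h1]
      by_cases h2 : a q x = 0
      · simp [h2]
      · exact absurd (hcol x h1 h2) hpq
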